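/- p_4 is the smallest term of the sequence of critical values: for every integer n ≥ 1, p_n ≥ p_4. -/

import Mathlib

open Finset

/-- Probability weight of a single path of length `N`. -/
noncomputable def pathProb (p : ℝ) (N : ℕ) (x : Fin N → Bool) : ℝ :=
  p ^ (Finset.univ.filter (fun i => x i = true)).card *
    (1 - p) ^ (N - (Finset.univ.filter (fun i => x i = true)).card)

open Classical in
/-- Probability of an event `E` for the `N`-step Bernoulli walk. -/
noncomputable def walkProb (p : ℝ) (N : ℕ) (E : Set (Fin N → Bool)) : ℝ :=
  ∑ x : Fin N → Bool, if x ∈ E then pathProb p N x else 0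

/-- Partial sum `S_j` of the walk given by the path `x`. -/
def walkS (N : ℕ) (x : Fin N → Bool) (j : ℕ) : ℤ :=
  ∑ i ∈ Finset.univ.filter (fun i : Fin N => (i : ℕ) < j), (if x i then (1 : ℤ) else -1)

/-- Running maximum `M_N = max_{0 ≤ j ≤ N} S_j`. -/
def walkM (N : ℕ) (x : Fin N → Bool) : ℤ :=
  (Finset.range (N + 1)).sup' Finset.nonempty_range_add_one (fun j => walkS N x j)

/-- `U_n(p) = P(M_n ≤ 1)`. -/
noncomputable def U (n : ℕ) (p : ℝ) : ℝ :=
  walkProb p n {x | walkM n x ≤ 1}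

/-- Value function `π_p(n, j)`, defined by backward induction. -/
noncomputable def piVal (p : ℝ) : ℕ → ℕ → ℝ
  | 0, 0 => 1
  | 0, 1 => 1
  | 0, _ + 2 => 0
  | n + 1, 0 => p * piVal p n 0 + (1 - p) * piVal p n 1
  | n + 1, 1 => max (U (n + 1) p) (p * piVal p n 0 + (1 - p) * piVal p n 2)
  | n + 1, j + 2 => p * piVal p n (j + 1) + (1 - p) * piVal p n (j + 3)

/-- `W_n(p) = p·π_p(n-1,0) + q·π_p(n-1,2)` (for `n ≥ 1`). -/
noncomputable def W (n : ℕ) (p : ℝ) : ℝ :=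
  p * piVal p (n - 1) 0 + (1 - p) * piVal p (n - 1) 2

/-- Critical value `p_n = sup {p ∈ (0,1) : U_n(p) ≥ W_n(p)}`. -/
noncomputable def pc (n : ℕ) : ℝ :=
  sSup {p : ℝ | p ∈ Set.Ioo (0 : ℝ) 1 ∧ U n p ≥ W n p}

lemma walkS_eq (N : ℕ) (x : Fin N → Bool) (j : ℕ) :
    walkS N x j = ∑ i : Fin N, if (i : ℕ) < j then (if x i then (1:ℤ) else -1) else 0 := by
  rw [walkS, Finset.sum_filter]

lemma walkS_zero (N : ℕ) (x : Fin N → Bool) : walkS N x 0 = 0 := by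
  simp [walkS_eq]

lemma walkS_succ (n : ℕ) (x : Fin (n+1) → Bool) (j : ℕ) :
    walkS (n+1) x (j+1) = (if x 0 then 1 else -1) + walkS n (Fin.tail x) j := by
  rw [walkS_eq, walkS_eq, Fin.sum_univ_succ]
  congr 1
  · apply Finset.sum_congr rfl
    intro i _
    have : ((i.succ : Fin (n+1)) : ℕ) = (i : ℕ) + 1 := rfl
    rw [this]
    simp [Fin.tail, Nat.succ_lt_succ_iff]; congr

lemma walkM_nonneg (N : ℕ) (x : Fin N → Bool) : 0 ≤ walkM N x := by
  have h0 : (0:ℕ) ∈ Finset.range (N+1) := by simp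
  have := Finset.le_sup' (fun j => walkS N x j) h0
  rwa [walkS_zero] at this

lemma walkM_succ (n : ℕ) (x : Fin (n+1) → Bool) :
    walkM (n+1) x = max 0 ((if x 0 then 1 else -1) + walkM n (Fin.tail x)) := by
  apply le_antisymm
  · apply Finset.sup'_le
    intro j hj
    match j with
    | 0 => rw [walkS_zero]; exact le_max_left _ _
    | (k+1) =>
      rw [walkS_succ]
      refine le_trans ?_ (le_max_right _ _)
      have hk : k ∈ Finset.range (n+1) := by
        simp only [Finset.mem_range] at hj ⊢; omega
      exact add_le_add_right (Finset.le_sup' (fun j => walkS n (Fin.tail x) j) hk) _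
  · rw [max_le_iff]
    constructor
    · exact walkM_nonneg _ _
    · have key : ∀ j ∈ Finset.range (n+1), walkS n (Fin.tail x) j ≤
          walkM (n+1) x - (if x 0 then 1 else -1) := by
        intro j hj
        have hj1 : j+1 ∈ Finset.range (n+1+1) := by
          simp only [Finset.mem_range] at hj ⊢; omega
        have h := Finset.le_sup' (fun j => walkS (n+1) x j) hj1
        rw [walkS_succ] at h
        have : walkM (n+1) x = (Finset.range (n+1+1)).sup' Finset.nonempty_range_add_one
          (fun j => walkS (n+1) x j) := rfl
        rw [this]; omega
      have h2 := Finset.sup'_le Finset.nonempty_range_add_one (fun j => walkS n (Fin.tail x) j) key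
      have : walkM n (Fin.tail x) = (Finset.range (n+1)).sup' Finset.nonempty_range_add_one
        (fun j => walkS n (Fin.tail x) j) := rfl
      rw [this]; omega

lemma pathProb_cons (p : ℝ) (n : ℕ) (b : Bool) (y : Fin n → Bool) :
    pathProb p (n+1) (Fin.cons b y) = (if b then p else 1 - p) * pathProb p n y := by
  have hcard : (Finset.univ.filter (fun i => (Fin.cons b y : Fin (n+1) → Bool) i = true)).card
      = (if b then 1 else 0) + (Finset.univ.filter (fun i => y i = true)).card := by
    rw [Finset.card_filter, Finset.card_filter, Fin.sum_univ_succ]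
    simp [Fin.cons_zero, Fin.cons_succ]
  have hk : (Finset.univ.filter (fun i => y i = true)).card ≤ n := by
    calc (Finset.univ.filter (fun i => y i = true)).card
        ≤ (Finset.univ : Finset (Fin n)).card := Finset.card_filter_le _ _
      _ = n := by simp
  set k := (Finset.univ.filter (fun i => y i = true)).card with hkdef
  rw [pathProb, pathProb, hcard]
  cases b
  · simp only [Bool.false_eq_true, if_false]
    rw [show 0 + k = k by omega, show n + 1 - k = (n - k) + 1 by omega, pow_succ]
    ring
  · simp only [if_true]
    rw [show 1 + k = k + 1 by omega, show n + 1 - (k + 1) = n - k by omega, pow_succ]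
    ring

lemma walkProb_succ (p : ℝ) (n : ℕ) (a : ℤ) (ha : 0 ≤ a) :
    walkProb p (n+1) {x | walkM (n+1) x ≤ a}
      = p * walkProb p n {x | walkM n x ≤ a - 1}
        + (1 - p) * walkProb p n {x | walkM n x ≤ a + 1} := by
  refine Eq.trans ((Fintype.sum_equiv (Fin.consEquiv (fun _ : Fin (n+1) => Bool))
      (fun z : Bool × (Fin n → Bool) =>
        if Fin.cons z.1 z.2 ∈ {x : Fin (n+1) → Bool | walkM (n+1) x ≤ a}
          then pathProb p (n+1) (Fin.cons z.1 z.2) else 0)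
      _ (fun z => by cases z with | mk b y => simp only [Fin.consEquiv, Equiv.coe_fn_mk]; congr)).symm) ?_
  rw [Fintype.sum_prod_type, Fintype.sum_bool]
  have htrue : ∀ y : Fin n → Bool,
      (if Fin.cons true y ∈ {x : Fin (n+1) → Bool | walkM (n+1) x ≤ a}
        then pathProb p (n+1) (Fin.cons true y) else 0)
      = p * (@ite _ (y ∈ {z : Fin n → Bool | walkM n z ≤ a - 1}) (Classical.propDecidable _)
          (pathProb p n y) 0) := by
    intro y
    rw [pathProb_cons]
    simp only [Set.mem_setOf_eq, walkM_succ, Fin.cons_zero, Fin.tail_cons, if_true]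
    rw [if_congr (show (max 0 (1 + walkM n y) ≤ a) ↔ (walkM n y ≤ a - 1) by
      rw [max_le_iff]; omega) rfl rfl]
    rw [mul_ite, mul_zero]
  have hfalse : ∀ y : Fin n → Bool,
      (if Fin.cons false y ∈ {x : Fin (n+1) → Bool | walkM (n+1) x ≤ a}
        then pathProb p (n+1) (Fin.cons false y) else 0)
      = (1-p) * (@ite _ (y ∈ {z : Fin n → Bool | walkM n z ≤ a + 1}) (Classical.propDecidable _)
          (pathProb p n y) 0) := by
    intro y
    rw [pathProb_cons]
    simp only [Set.mem_setOf_eq, walkM_succ, Fin.cons_zero, Fin.tail_cons,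
      Bool.false_eq_true, if_false]
    rw [if_congr (show (max 0 ((-1) + walkM n y) ≤ a) ↔ (walkM n y ≤ a + 1) by
      rw [max_le_iff]; constructor
      · intro h; omega
      · intro h; refine ⟨ha, by omega⟩) rfl rfl]
    rw [mul_ite, mul_zero]
  rw [Finset.sum_congr rfl (fun y _ => htrue y), Finset.sum_congr rfl (fun y _ => hfalse y)]
  rw [← Finset.mul_sum, ← Finset.mul_sum]
  simp only [walkProb]

noncomputable def Vw (p : ℝ) (n : ℕ) (a : ℤ) : ℝ := walkProb p n {x | walkM n x ≤ a}

lemma Vw_neg (p : ℝ) (n : ℕ) (a : ℤ) (ha : a < 0) : Vw p n a = 0 := by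
  classical
  rw [Vw, walkProb]
  apply Finset.sum_eq_zero
  intro x _
  rw [if_neg]
  intro h
  have := walkM_nonneg n x
  simp only [Set.mem_setOf_eq] at h
  omega

lemma Vw_zero (p : ℝ) (a : ℤ) (ha : 0 ≤ a) : Vw p 0 a = 1 := by
  have hM : ∀ x : Fin 0 → Bool, walkM 0 x ≤ a := by
    intro x
    apply Finset.sup'_le
    intro j hj
    have hj0 : j = 0 := by simpa using hj
    subst hj0
    rw [walkS_zero]
    omega
  rw [Vw, walkProb, Fintype.sum_unique]
  simp only [Set.mem_setOf_eq, hM, if_true, pathProb]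
  simp

lemma Vw_succ (p : ℝ) (n : ℕ) (a : ℤ) (ha : 0 ≤ a) :
    Vw p (n+1) a = p * Vw p n (a-1) + (1-p) * Vw p n (a+1) :=
  walkProb_succ p n a ha

lemma Vw_succ_zero (p : ℝ) (n : ℕ) : Vw p (n+1) 0 = (1-p) * Vw p n 1 := by
  rw [Vw_succ p n 0 le_rfl, Vw_neg p n (0-1) (by omega)]
  norm_num

lemma Vw_big (p : ℝ) (n : ℕ) (a : ℤ) (h : (n:ℤ) ≤ a) : Vw p n a = 1 := by
  induction n generalizing a with
  | zero => exact Vw_zero p a (by omega)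
  | succ m ih =>
    rw [Vw_succ p m a (by omega), ih (a-1) (by omega), ih (a+1) (by omega)]
    ring

lemma U_eq_Vw (p : ℝ) (n : ℕ) : U n p = Vw p n 1 := rfl


lemma piVal_b00 (p : ℝ) : piVal p 0 0 = 1 := by simp [piVal]
lemma piVal_b01 (p : ℝ) : piVal p 0 1 = 1 := by simp [piVal]
lemma piVal_b2 (p : ℝ) (j : ℕ) : piVal p 0 (j+2) = 0 := by simp [piVal]
lemma piVal_zeroE (p : ℝ) (n : ℕ) :
    piVal p (n+1) 0 = p * piVal p n 0 + (1 - p) * piVal p n 1 := by simp [piVal]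
lemma piVal_oneE (p : ℝ) (n : ℕ) :
    piVal p (n+1) 1 = max (U (n+1) p) (p * piVal p n 0 + (1 - p) * piVal p n 2) := by
  simp [piVal]
lemma piVal_twoE (p : ℝ) (n j : ℕ) :
    piVal p (n+1) (j+2) = p * piVal p n (j+1) + (1 - p) * piVal p n (j+3) := by
  simp [piVal]

lemma Vl_0_0 : Vw (47/100) 0 0 = 1 := Vw_big _ _ _ (by norm_num)

lemma Vl_0_1 : Vw (47/100) 0 1 = 1 := Vw_big _ _ _ (by norm_num)

lemma Vl_0_2 : Vw (47/100) 0 2 = 1 := Vw_big _ _ _ (by norm_num)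

lemma Vl_0_3 : Vw (47/100) 0 3 = 1 := Vw_big _ _ _ (by norm_num)

lemma Vl_0_4 : Vw (47/100) 0 4 = 1 := Vw_big _ _ _ (by norm_num)

lemma Vl_0_5 : Vw (47/100) 0 5 = 1 := Vw_big _ _ _ (by norm_num)

lemma Vl_0_6 : Vw (47/100) 0 6 = 1 := Vw_big _ _ _ (by norm_num)

lemma Vl_0_7 : Vw (47/100) 0 7 = 1 := Vw_big _ _ _ (by norm_num)

lemma Vl_0_8 : Vw (47/100) 0 8 = 1 := Vw_big _ _ _ (by norm_num)

lemma Vl_1_0 : Vw (47/100) 1 0 = (53/100 : ℝ) := by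
  have h := Vw_succ_zero (47/100 : ℝ) 0
  norm_num [Vl_0_1] at h
  linarith [h]

lemma Vl_1_1 : Vw (47/100) 1 1 = 1 := Vw_big _ _ _ (by norm_num)

lemma Vl_1_2 : Vw (47/100) 1 2 = 1 := Vw_big _ _ _ (by norm_num)

lemma Vl_1_3 : Vw (47/100) 1 3 = 1 := Vw_big _ _ _ (by norm_num)

lemma Vl_1_4 : Vw (47/100) 1 4 = 1 := Vw_big _ _ _ (by norm_num)

lemma Vl_1_5 : Vw (47/100) 1 5 = 1 := Vw_big _ _ _ (by norm_num)

lemma Vl_1_6 : Vw (47/100) 1 6 = 1 := Vw_big _ _ _ (by norm_num)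

lemma Vl_1_7 : Vw (47/100) 1 7 = 1 := Vw_big _ _ _ (by norm_num)

lemma Vl_1_8 : Vw (47/100) 1 8 = 1 := Vw_big _ _ _ (by norm_num)

lemma Vl_2_0 : Vw (47/100) 2 0 = (53/100 : ℝ) := by
  have h := Vw_succ_zero (47/100 : ℝ) 1
  norm_num [Vl_1_1] at h
  linarith [h]

lemma Vl_2_1 : Vw (47/100) 2 1 = (7791/10000 : ℝ) := by
  have h := Vw_succ (47/100 : ℝ) 1 1 (by norm_num)
  norm_num [Vl_1_0, Vl_1_2] at h
  linarith [h]

lemma Vl_2_2 : Vw (47/100) 2 2 = 1 := Vw_big _ _ _ (by norm_num)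

lemma Vl_2_3 : Vw (47/100) 2 3 = 1 := Vw_big _ _ _ (by norm_num)

lemma Vl_2_4 : Vw (47/100) 2 4 = 1 := Vw_big _ _ _ (by norm_num)

lemma Vl_2_5 : Vw (47/100) 2 5 = 1 := Vw_big _ _ _ (by norm_num)

lemma Vl_2_6 : Vw (47/100) 2 6 = 1 := Vw_big _ _ _ (by norm_num)

lemma Vl_2_7 : Vw (47/100) 2 7 = 1 := Vw_big _ _ _ (by norm_num)

lemma Vl_2_8 : Vw (47/100) 2 8 = 1 := Vw_big _ _ _ (by norm_num)

lemma Vl_3_0 : Vw (47/100) 3 0 = (412923/1000000 : ℝ) := by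
  have h := Vw_succ_zero (47/100 : ℝ) 2
  norm_num [Vl_2_1] at h
  linarith [h]

lemma Vl_3_1 : Vw (47/100) 3 1 = (7791/10000 : ℝ) := by
  have h := Vw_succ (47/100 : ℝ) 2 1 (by norm_num)
  norm_num [Vl_2_0, Vl_2_2] at h
  linarith [h]

lemma Vl_3_2 : Vw (47/100) 3 2 = (896177/1000000 : ℝ) := by
  have h := Vw_succ (47/100 : ℝ) 2 2 (by norm_num)
  norm_num [Vl_2_1, Vl_2_3] at h
  linarith [h]

lemma Vl_3_3 : Vw (47/100) 3 3 = 1 := Vw_big _ _ _ (by norm_num)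

lemma Vl_3_4 : Vw (47/100) 3 4 = 1 := Vw_big _ _ _ (by norm_num)

lemma Vl_3_5 : Vw (47/100) 3 5 = 1 := Vw_big _ _ _ (by norm_num)

lemma Vl_3_6 : Vw (47/100) 3 6 = 1 := Vw_big _ _ _ (by norm_num)

lemma Vl_3_7 : Vw (47/100) 3 7 = 1 := Vw_big _ _ _ (by norm_num)

lemma Vl_3_8 : Vw (47/100) 3 8 = 1 := Vw_big _ _ _ (by norm_num)

lemma Vl_4_0 : Vw (47/100) 4 0 = (412923/1000000 : ℝ) := by
  have h := Vw_succ_zero (47/100 : ℝ) 3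
  norm_num [Vl_3_1] at h
  linarith [h]

lemma Vl_4_1 : Vw (47/100) 4 1 = (33452381/50000000 : ℝ) := by
  have h := Vw_succ (47/100 : ℝ) 3 1 (by norm_num)
  norm_num [Vl_3_0, Vl_3_2] at h
  linarith [h]

lemma Vl_4_2 : Vw (47/100) 4 2 = (896177/1000000 : ℝ) := by
  have h := Vw_succ (47/100 : ℝ) 3 2 (by norm_num)
  norm_num [Vl_3_1, Vl_3_3] at h
  linarith [h]

lemma Vl_4_3 : Vw (47/100) 4 3 = (95120319/100000000 : ℝ) := by
  have h := Vw_succ (47/100 : ℝ) 3 3 (by norm_num)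
  norm_num [Vl_3_2, Vl_3_4] at h
  linarith [h]

lemma Vl_4_4 : Vw (47/100) 4 4 = 1 := Vw_big _ _ _ (by norm_num)

lemma Vl_4_5 : Vw (47/100) 4 5 = 1 := Vw_big _ _ _ (by norm_num)

lemma Vl_4_6 : Vw (47/100) 4 6 = 1 := Vw_big _ _ _ (by norm_num)

lemma Vl_4_7 : Vw (47/100) 4 7 = 1 := Vw_big _ _ _ (by norm_num)

lemma Vl_4_8 : Vw (47/100) 4 8 = 1 := Vw_big _ _ _ (by norm_num)

lemma Vl_5_0 : Vw (47/100) 5 0 = (1772976193/5000000000 : ℝ) := by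
  have h := Vw_succ_zero (47/100 : ℝ) 4
  norm_num [Vl_4_1] at h
  linarith [h]

lemma Vl_5_1 : Vw (47/100) 5 1 = (33452381/50000000 : ℝ) := by
  have h := Vw_succ (47/100 : ℝ) 4 1 (by norm_num)
  norm_num [Vl_4_0, Vl_4_2] at h
  linarith [h]

lemma Vl_5_2 : Vw (47/100) 5 2 = (8185900721/10000000000 : ℝ) := by
  have h := Vw_succ (47/100 : ℝ) 4 2 (by norm_num)
  norm_num [Vl_4_1, Vl_4_3] at h
  linarith [h]

lemma Vl_5_3 : Vw (47/100) 5 3 = (95120319/100000000 : ℝ) := by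
  have h := Vw_succ (47/100 : ℝ) 4 3 (by norm_num)
  norm_num [Vl_4_2, Vl_4_4] at h
  linarith [h]

lemma Vl_5_4 : Vw (47/100) 5 4 = (9770654993/10000000000 : ℝ) := by
  have h := Vw_succ (47/100 : ℝ) 4 4 (by norm_num)
  norm_num [Vl_4_3, Vl_4_5] at h
  linarith [h]

lemma Vl_5_5 : Vw (47/100) 5 5 = 1 := Vw_big _ _ _ (by norm_num)

lemma Vl_5_6 : Vw (47/100) 5 6 = 1 := Vw_big _ _ _ (by norm_num)

lemma Vl_5_7 : Vw (47/100) 5 7 = 1 := Vw_big _ _ _ (by norm_num)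

lemma Vl_5_8 : Vw (47/100) 5 8 = 1 := Vw_big _ _ _ (by norm_num)

lemma Vl_6_0 : Vw (47/100) 6 0 = (1772976193/5000000000 : ℝ) := by
  have h := Vw_succ_zero (47/100 : ℝ) 5
  norm_num [Vl_5_1] at h
  linarith [h]

lemma Vl_6_1 : Vw (47/100) 6 1 = (120102500071/200000000000 : ℝ) := by
  have h := Vw_succ (47/100 : ℝ) 5 1 (by norm_num)
  norm_num [Vl_5_0, Vl_5_2] at h
  linarith [h]

lemma Vl_6_2 : Vw (47/100) 6 2 = (8185900721/10000000000 : ℝ) := by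
  have h := Vw_succ (47/100 : ℝ) 5 2 (by norm_num)
  norm_num [Vl_5_1, Vl_5_3] at h
  linarith [h]

lemma Vl_6_3 : Vw (47/100) 6 3 = (225645512129/250000000000 : ℝ) := by
  have h := Vw_succ (47/100 : ℝ) 5 3 (by norm_num)
  norm_num [Vl_5_2, Vl_5_4] at h
  linarith [h]

lemma Vl_6_4 : Vw (47/100) 6 4 = (9770654993/10000000000 : ℝ) := by
  have h := Vw_succ (47/100 : ℝ) 5 4 (by norm_num)
  norm_num [Vl_5_3, Vl_5_5] at h
  linarith [h]

lemma Vl_6_5 : Vw (47/100) 6 5 = (989220784671/1000000000000 : ℝ) := by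
  have h := Vw_succ (47/100 : ℝ) 5 5 (by norm_num)
  norm_num [Vl_5_4, Vl_5_6] at h
  linarith [h]

lemma Vl_6_6 : Vw (47/100) 6 6 = 1 := Vw_big _ _ _ (by norm_num)

lemma Vl_6_7 : Vw (47/100) 6 7 = 1 := Vw_big _ _ _ (by norm_num)

lemma Vl_6_8 : Vw (47/100) 6 8 = 1 := Vw_big _ _ _ (by norm_num)

lemma Vl_7_0 : Vw (47/100) 7 0 = (6365432503763/20000000000000 : ℝ) := by
  have h := Vw_succ_zero (47/100 : ℝ) 6
  norm_num [Vl_6_1] at h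
  linarith [h]

lemma Vl_7_1 : Vw (47/100) 7 1 = (120102500071/200000000000 : ℝ) := by
  have h := Vw_succ (47/100 : ℝ) 6 1 (by norm_num)
  norm_num [Vl_6_0, Vl_6_2] at h
  linarith [h]

lemma Vl_7_2 : Vw (47/100) 7 2 = (76060936088033/100000000000000 : ℝ) := by
  have h := Vw_succ (47/100 : ℝ) 6 2 (by norm_num)
  norm_num [Vl_6_1, Vl_6_3] at h
  linarith [h]

lemma Vl_7_3 : Vw (47/100) 7 3 = (225645512129/250000000000 : ℝ) := by
  have h := Vw_succ (47/100 : ℝ) 6 3 (by norm_num)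
  norm_num [Vl_6_2, Vl_6_4] at h
  linarith [h]

lemma Vl_7_4 : Vw (47/100) 7 4 = (18970011573563/20000000000000 : ℝ) := by
  have h := Vw_succ (47/100 : ℝ) 6 4 (by norm_num)
  norm_num [Vl_6_3, Vl_6_5] at h
  linarith [h]

lemma Vl_7_5 : Vw (47/100) 7 5 = (989220784671/1000000000000 : ℝ) := by
  have h := Vw_succ (47/100 : ℝ) 6 5 (by norm_num)
  norm_num [Vl_6_4, Vl_6_6] at h
  linarith [h]

lemma Vl_7_6 : Vw (47/100) 7 6 = (99493376879537/100000000000000 : ℝ) := by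
  have h := Vw_succ (47/100 : ℝ) 6 6 (by norm_num)
  norm_num [Vl_6_5, Vl_6_7] at h
  linarith [h]

lemma Vl_7_7 : Vw (47/100) 7 7 = 1 := Vw_big _ _ _ (by norm_num)

lemma Vl_7_8 : Vw (47/100) 7 8 = 1 := Vw_big _ _ _ (by norm_num)

lemma Ul_0 : U 0 (47/100) = (1 : ℝ) := by rw [U_eq_Vw, Vl_0_1]

lemma Ul_1 : U 1 (47/100) = (1 : ℝ) := by rw [U_eq_Vw, Vl_1_1]

lemma Ul_2 : U 2 (47/100) = (7791/10000 : ℝ) := by rw [U_eq_Vw, Vl_2_1]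

lemma Ul_3 : U 3 (47/100) = (7791/10000 : ℝ) := by rw [U_eq_Vw, Vl_3_1]

lemma Ul_4 : U 4 (47/100) = (33452381/50000000 : ℝ) := by rw [U_eq_Vw, Vl_4_1]

lemma Ul_5 : U 5 (47/100) = (33452381/50000000 : ℝ) := by rw [U_eq_Vw, Vl_5_1]

lemma Ul_6 : U 6 (47/100) = (120102500071/200000000000 : ℝ) := by rw [U_eq_Vw, Vl_6_1]

lemma Ul_7 : U 7 (47/100) = (120102500071/200000000000 : ℝ) := by rw [U_eq_Vw, Vl_7_1]

lemma pil_0_0 : piVal (47/100) 0 0 = 1 := piVal_b00 _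

lemma pil_0_1 : piVal (47/100) 0 1 = 1 := piVal_b01 _

lemma pil_0_2 : piVal (47/100) 0 2 = 0 := piVal_b2 _ 0

lemma pil_0_3 : piVal (47/100) 0 3 = 0 := piVal_b2 _ 1

lemma pil_0_4 : piVal (47/100) 0 4 = 0 := piVal_b2 _ 2

lemma pil_0_5 : piVal (47/100) 0 5 = 0 := piVal_b2 _ 3

lemma pil_0_6 : piVal (47/100) 0 6 = 0 := piVal_b2 _ 4

lemma pil_0_7 : piVal (47/100) 0 7 = 0 := piVal_b2 _ 5

lemma pil_0_8 : piVal (47/100) 0 8 = 0 := piVal_b2 _ 6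

lemma pil_0_9 : piVal (47/100) 0 9 = 0 := piVal_b2 _ 7

lemma pil_0_10 : piVal (47/100) 0 10 = 0 := piVal_b2 _ 8

lemma pil_0_11 : piVal (47/100) 0 11 = 0 := piVal_b2 _ 9

lemma pil_0_12 : piVal (47/100) 0 12 = 0 := piVal_b2 _ 10

lemma pil_0_13 : piVal (47/100) 0 13 = 0 := piVal_b2 _ 11

lemma pil_0_14 : piVal (47/100) 0 14 = 0 := piVal_b2 _ 12

lemma pil_1_0 : piVal (47/100) 1 0 = (1 : ℝ) := by
  have h := piVal_zeroE (47/100 : ℝ) 0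
  norm_num [pil_0_0, pil_0_1] at h
  linarith [h]

lemma pil_1_1 : piVal (47/100) 1 1 = (1 : ℝ) := by
  have h := piVal_oneE (47/100 : ℝ) 0
  norm_num [Ul_1, pil_0_0, pil_0_2, max_def] at h
  linarith [h]

lemma pil_1_2 : piVal (47/100) 1 2 = (47/100 : ℝ) := by
  have h := piVal_twoE (47/100 : ℝ) 0 0
  norm_num [pil_0_1, pil_0_3] at h
  linarith [h]

lemma pil_1_3 : piVal (47/100) 1 3 = (0 : ℝ) := by
  have h := piVal_twoE (47/100 : ℝ) 0 1
  norm_num [pil_0_2, pil_0_4] at h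
  linarith [h]

lemma pil_1_4 : piVal (47/100) 1 4 = (0 : ℝ) := by
  have h := piVal_twoE (47/100 : ℝ) 0 2
  norm_num [pil_0_3, pil_0_5] at h
  linarith [h]

lemma pil_1_5 : piVal (47/100) 1 5 = (0 : ℝ) := by
  have h := piVal_twoE (47/100 : ℝ) 0 3
  norm_num [pil_0_4, pil_0_6] at h
  linarith [h]

lemma pil_1_6 : piVal (47/100) 1 6 = (0 : ℝ) := by
  have h := piVal_twoE (47/100 : ℝ) 0 4
  norm_num [pil_0_5, pil_0_7] at h
  linarith [h]

lemma pil_1_7 : piVal (47/100) 1 7 = (0 : ℝ) := by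
  have h := piVal_twoE (47/100 : ℝ) 0 5
  norm_num [pil_0_6, pil_0_8] at h
  linarith [h]

lemma pil_1_8 : piVal (47/100) 1 8 = (0 : ℝ) := by
  have h := piVal_twoE (47/100 : ℝ) 0 6
  norm_num [pil_0_7, pil_0_9] at h
  linarith [h]

lemma pil_1_9 : piVal (47/100) 1 9 = (0 : ℝ) := by
  have h := piVal_twoE (47/100 : ℝ) 0 7
  norm_num [pil_0_8, pil_0_10] at h
  linarith [h]

lemma pil_1_10 : piVal (47/100) 1 10 = (0 : ℝ) := by
  have h := piVal_twoE (47/100 : ℝ) 0 8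
  norm_num [pil_0_9, pil_0_11] at h
  linarith [h]

lemma pil_1_11 : piVal (47/100) 1 11 = (0 : ℝ) := by
  have h := piVal_twoE (47/100 : ℝ) 0 9
  norm_num [pil_0_10, pil_0_12] at h
  linarith [h]

lemma pil_1_12 : piVal (47/100) 1 12 = (0 : ℝ) := by
  have h := piVal_twoE (47/100 : ℝ) 0 10
  norm_num [pil_0_11, pil_0_13] at h
  linarith [h]

lemma pil_1_13 : piVal (47/100) 1 13 = (0 : ℝ) := by
  have h := piVal_twoE (47/100 : ℝ) 0 11
  norm_num [pil_0_12, pil_0_14] at h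
  linarith [h]

lemma pil_2_0 : piVal (47/100) 2 0 = (1 : ℝ) := by
  have h := piVal_zeroE (47/100 : ℝ) 1
  norm_num [pil_1_0, pil_1_1] at h
  linarith [h]

lemma pil_2_1 : piVal (47/100) 2 1 = (7791/10000 : ℝ) := by
  have h := piVal_oneE (47/100 : ℝ) 1
  norm_num [Ul_2, pil_1_0, pil_1_2, max_def] at h
  linarith [h]

lemma pil_2_2 : piVal (47/100) 2 2 = (47/100 : ℝ) := by
  have h := piVal_twoE (47/100 : ℝ) 1 0
  norm_num [pil_1_1, pil_1_3] at h
  linarith [h]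

lemma pil_2_3 : piVal (47/100) 2 3 = (2209/10000 : ℝ) := by
  have h := piVal_twoE (47/100 : ℝ) 1 1
  norm_num [pil_1_2, pil_1_4] at h
  linarith [h]

lemma pil_2_4 : piVal (47/100) 2 4 = (0 : ℝ) := by
  have h := piVal_twoE (47/100 : ℝ) 1 2
  norm_num [pil_1_3, pil_1_5] at h
  linarith [h]

lemma pil_2_5 : piVal (47/100) 2 5 = (0 : ℝ) := by
  have h := piVal_twoE (47/100 : ℝ) 1 3
  norm_num [pil_1_4, pil_1_6] at h
  linarith [h]

lemma pil_2_6 : piVal (47/100) 2 6 = (0 : ℝ) := by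
  have h := piVal_twoE (47/100 : ℝ) 1 4
  norm_num [pil_1_5, pil_1_7] at h
  linarith [h]

lemma pil_2_7 : piVal (47/100) 2 7 = (0 : ℝ) := by
  have h := piVal_twoE (47/100 : ℝ) 1 5
  norm_num [pil_1_6, pil_1_8] at h
  linarith [h]

lemma pil_2_8 : piVal (47/100) 2 8 = (0 : ℝ) := by
  have h := piVal_twoE (47/100 : ℝ) 1 6
  norm_num [pil_1_7, pil_1_9] at h
  linarith [h]

lemma pil_2_9 : piVal (47/100) 2 9 = (0 : ℝ) := by
  have h := piVal_twoE (47/100 : ℝ) 1 7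
  norm_num [pil_1_8, pil_1_10] at h
  linarith [h]

lemma pil_2_10 : piVal (47/100) 2 10 = (0 : ℝ) := by
  have h := piVal_twoE (47/100 : ℝ) 1 8
  norm_num [pil_1_9, pil_1_11] at h
  linarith [h]

lemma pil_2_11 : piVal (47/100) 2 11 = (0 : ℝ) := by
  have h := piVal_twoE (47/100 : ℝ) 1 9
  norm_num [pil_1_10, pil_1_12] at h
  linarith [h]

lemma pil_2_12 : piVal (47/100) 2 12 = (0 : ℝ) := by
  have h := piVal_twoE (47/100 : ℝ) 1 10
  norm_num [pil_1_11, pil_1_13] at h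
  linarith [h]

lemma pil_3_0 : piVal (47/100) 3 0 = (882923/1000000 : ℝ) := by
  have h := piVal_zeroE (47/100 : ℝ) 2
  norm_num [pil_2_0, pil_2_1] at h
  linarith [h]

lemma pil_3_1 : piVal (47/100) 3 1 = (7791/10000 : ℝ) := by
  have h := piVal_oneE (47/100 : ℝ) 2
  norm_num [Ul_3, pil_2_0, pil_2_2, max_def] at h
  linarith [h]

lemma pil_3_2 : piVal (47/100) 3 2 = (241627/500000 : ℝ) := by
  have h := piVal_twoE (47/100 : ℝ) 2 0
  norm_num [pil_2_1, pil_2_3] at h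
  linarith [h]

lemma pil_3_3 : piVal (47/100) 3 3 = (2209/10000 : ℝ) := by
  have h := piVal_twoE (47/100 : ℝ) 2 1
  norm_num [pil_2_2, pil_2_4] at h
  linarith [h]

lemma pil_3_4 : piVal (47/100) 3 4 = (103823/1000000 : ℝ) := by
  have h := piVal_twoE (47/100 : ℝ) 2 2
  norm_num [pil_2_3, pil_2_5] at h
  linarith [h]

lemma pil_3_5 : piVal (47/100) 3 5 = (0 : ℝ) := by
  have h := piVal_twoE (47/100 : ℝ) 2 3
  norm_num [pil_2_4, pil_2_6] at h
  linarith [h]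

lemma pil_3_6 : piVal (47/100) 3 6 = (0 : ℝ) := by
  have h := piVal_twoE (47/100 : ℝ) 2 4
  norm_num [pil_2_5, pil_2_7] at h
  linarith [h]

lemma pil_3_7 : piVal (47/100) 3 7 = (0 : ℝ) := by
  have h := piVal_twoE (47/100 : ℝ) 2 5
  norm_num [pil_2_6, pil_2_8] at h
  linarith [h]

lemma pil_3_8 : piVal (47/100) 3 8 = (0 : ℝ) := by
  have h := piVal_twoE (47/100 : ℝ) 2 6
  norm_num [pil_2_7, pil_2_9] at h
  linarith [h]

lemma pil_3_9 : piVal (47/100) 3 9 = (0 : ℝ) := by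
  have h := piVal_twoE (47/100 : ℝ) 2 7
  norm_num [pil_2_8, pil_2_10] at h
  linarith [h]

lemma pil_3_10 : piVal (47/100) 3 10 = (0 : ℝ) := by
  have h := piVal_twoE (47/100 : ℝ) 2 8
  norm_num [pil_2_9, pil_2_11] at h
  linarith [h]

lemma pil_3_11 : piVal (47/100) 3 11 = (0 : ℝ) := by
  have h := piVal_twoE (47/100 : ℝ) 2 9
  norm_num [pil_2_10, pil_2_12] at h
  linarith [h]

lemma pil_4_0 : piVal (47/100) 4 0 = (82789681/100000000 : ℝ) := by
  have h := piVal_zeroE (47/100 : ℝ) 3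
  norm_num [pil_3_0, pil_3_1] at h
  linarith [h]

lemma pil_4_1 : piVal (47/100) 4 1 = (67109843/100000000 : ℝ) := by
  have h := piVal_oneE (47/100 : ℝ) 3
  norm_num [Ul_4, pil_3_0, pil_3_2, max_def] at h
  linarith [h]

lemma pil_4_2 : piVal (47/100) 4 2 = (241627/500000 : ℝ) := by
  have h := piVal_twoE (47/100 : ℝ) 3 0
  norm_num [pil_3_1, pil_3_3] at h
  linarith [h]

lemma pil_4_3 : piVal (47/100) 4 3 = (28215557/100000000 : ℝ) := by
  have h := piVal_twoE (47/100 : ℝ) 3 1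
  norm_num [pil_3_2, pil_3_4] at h
  linarith [h]

lemma pil_4_4 : piVal (47/100) 4 4 = (103823/1000000 : ℝ) := by
  have h := piVal_twoE (47/100 : ℝ) 3 2
  norm_num [pil_3_3, pil_3_5] at h
  linarith [h]

lemma pil_4_5 : piVal (47/100) 4 5 = (4879681/100000000 : ℝ) := by
  have h := piVal_twoE (47/100 : ℝ) 3 3
  norm_num [pil_3_4, pil_3_6] at h
  linarith [h]

lemma pil_4_6 : piVal (47/100) 4 6 = (0 : ℝ) := by
  have h := piVal_twoE (47/100 : ℝ) 3 4
  norm_num [pil_3_5, pil_3_7] at h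
  linarith [h]

lemma pil_4_7 : piVal (47/100) 4 7 = (0 : ℝ) := by
  have h := piVal_twoE (47/100 : ℝ) 3 5
  norm_num [pil_3_6, pil_3_8] at h
  linarith [h]

lemma pil_4_8 : piVal (47/100) 4 8 = (0 : ℝ) := by
  have h := piVal_twoE (47/100 : ℝ) 3 6
  norm_num [pil_3_7, pil_3_9] at h
  linarith [h]

lemma pil_4_9 : piVal (47/100) 4 9 = (0 : ℝ) := by
  have h := piVal_twoE (47/100 : ℝ) 3 7
  norm_num [pil_3_8, pil_3_10] at h
  linarith [h]

lemma pil_4_10 : piVal (47/100) 4 10 = (0 : ℝ) := by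
  have h := piVal_twoE (47/100 : ℝ) 3 8
  norm_num [pil_3_9, pil_3_11] at h
  linarith [h]

lemma pil_5_0 : piVal (47/100) 5 0 = (3723968343/5000000000 : ℝ) := by
  have h := piVal_zeroE (47/100 : ℝ) 4
  norm_num [pil_4_0, pil_4_1] at h
  linarith [h]

lemma pil_5_1 : piVal (47/100) 5 1 = (33452381/50000000 : ℝ) := by
  have h := piVal_oneE (47/100 : ℝ) 4
  norm_num [Ul_5, pil_4_0, pil_4_2, max_def] at h
  linarith [h]

lemma pil_5_2 : piVal (47/100) 5 2 = (2324793571/5000000000 : ℝ) := by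
  have h := piVal_twoE (47/100 : ℝ) 4 0
  norm_num [pil_4_1, pil_4_3] at h
  linarith [h]

lemma pil_5_3 : piVal (47/100) 5 3 = (28215557/100000000 : ℝ) := by
  have h := piVal_twoE (47/100 : ℝ) 4 1
  norm_num [pil_4_2, pil_4_4] at h
  linarith [h]

lemma pil_5_4 : piVal (47/100) 5 4 = (49523571/312500000 : ℝ) := by
  have h := piVal_twoE (47/100 : ℝ) 4 2
  norm_num [pil_4_3, pil_4_5] at h
  linarith [h]

lemma pil_5_5 : piVal (47/100) 5 5 = (4879681/100000000 : ℝ) := by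
  have h := piVal_twoE (47/100 : ℝ) 4 3
  norm_num [pil_4_4, pil_4_6] at h
  linarith [h]

lemma pil_5_6 : piVal (47/100) 5 6 = (229345007/10000000000 : ℝ) := by
  have h := piVal_twoE (47/100 : ℝ) 4 4
  norm_num [pil_4_5, pil_4_7] at h
  linarith [h]

lemma pil_5_7 : piVal (47/100) 5 7 = (0 : ℝ) := by
  have h := piVal_twoE (47/100 : ℝ) 4 5
  norm_num [pil_4_6, pil_4_8] at h
  linarith [h]

lemma pil_5_8 : piVal (47/100) 5 8 = (0 : ℝ) := by
  have h := piVal_twoE (47/100 : ℝ) 4 6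
  norm_num [pil_4_7, pil_4_9] at h
  linarith [h]

lemma pil_5_9 : piVal (47/100) 5 9 = (0 : ℝ) := by
  have h := piVal_twoE (47/100 : ℝ) 4 7
  norm_num [pil_4_8, pil_4_10] at h
  linarith [h]

lemma pil_6_0 : piVal (47/100) 6 0 = (352324131421/500000000000 : ℝ) := by
  have h := piVal_zeroE (47/100 : ℝ) 5
  norm_num [pil_5_0, pil_5_1] at h
  linarith [h]

lemma pil_6_1 : piVal (47/100) 6 1 = (120102500071/200000000000 : ℝ) := by
  have h := piVal_oneE (47/100 : ℝ) 5
  norm_num [Ul_6, pil_5_0, pil_5_2, max_def] at h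
  linarith [h]

lemma pil_6_2 : piVal (47/100) 6 2 = (927989667/2000000000 : ℝ) := by
  have h := piVal_twoE (47/100 : ℝ) 5 0
  norm_num [pil_5_1, pil_5_3] at h
  linarith [h]

lemma pil_6_3 : piVal (47/100) 6 3 = (30252257209/100000000000 : ℝ) := by
  have h := piVal_twoE (47/100 : ℝ) 5 1
  norm_num [pil_5_2, pil_5_4] at h
  linarith [h]

lemma pil_6_4 : piVal (47/100) 6 4 = (49523571/312500000 : ℝ) := by
  have h := piVal_twoE (47/100 : ℝ) 5 2
  norm_num [pil_5_3, pil_5_5] at h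
  linarith [h]

lemma pil_6_5 : piVal (47/100) 6 5 = (17327747231/200000000000 : ℝ) := by
  have h := piVal_twoE (47/100 : ℝ) 5 3
  norm_num [pil_5_4, pil_5_6] at h
  linarith [h]

lemma pil_6_6 : piVal (47/100) 6 6 = (229345007/10000000000 : ℝ) := by
  have h := piVal_twoE (47/100 : ℝ) 5 4
  norm_num [pil_5_5, pil_5_7] at h
  linarith [h]

lemma pil_6_7 : piVal (47/100) 6 7 = (10779215329/1000000000000 : ℝ) := by
  have h := piVal_twoE (47/100 : ℝ) 5 5
  norm_num [pil_5_6, pil_5_8] at h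
  linarith [h]

lemma pil_6_8 : piVal (47/100) 6 8 = (0 : ℝ) := by
  have h := piVal_twoE (47/100 : ℝ) 5 6
  norm_num [pil_5_7, pil_5_9] at h
  linarith [h]

lemma pil_7_0 : piVal (47/100) 7 0 = (64945630872389/100000000000000 : ℝ) := by
  have h := piVal_zeroE (47/100 : ℝ) 6
  norm_num [pil_6_0, pil_6_1] at h
  linarith [h]

lemma Wl_0 : W 0 (47/100) = (47/100 : ℝ) := by
  unfold W; norm_num [pil_0_0, pil_0_2]

lemma Wl_1 : W 1 (47/100) = (47/100 : ℝ) := by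
  unfold W; norm_num [pil_0_0, pil_0_2]

lemma Wl_2 : W 2 (47/100) = (7191/10000 : ℝ) := by
  unfold W; norm_num [pil_1_0, pil_1_2]

lemma Wl_3 : W 3 (47/100) = (7191/10000 : ℝ) := by
  unfold W; norm_num [pil_2_0, pil_2_2]

lemma Wl_4 : W 4 (47/100) = (67109843/100000000 : ℝ) := by
  unfold W; norm_num [pil_3_0, pil_3_2]

lemma Wl_5 : W 5 (47/100) = (6452361207/10000000000 : ℝ) := by
  unfold W; norm_num [pil_4_0, pil_4_2]

lemma Wl_6 : W 6 (47/100) = (37280071423/62500000000 : ℝ) := by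
  unfold W; norm_num [pil_5_0, pil_5_2]

lemma Wl_7 : W 7 (47/100) = (28855097264537/50000000000000 : ℝ) := by
  unfold W; norm_num [pil_6_0, pil_6_2]


/-- The survival-type comparison inequality `q·V_{n+1}(a) ≥ p·V_n(a) + δ(1-r^{a+1})`. -/
lemma CD : ∀ n, 5 ≤ n → ∀ a : ℕ,
    (47/100:ℝ) * Vw (47/100) n (a:ℤ) + (17/1000) * (1 - (47/53:ℝ)^(a+1))
      ≤ (53/100) * Vw (47/100) (n+1) (a:ℤ) := by
  intro n hn
  induction n, hn using Nat.le_induction with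
  | base =>
    intro a
    rcases lt_or_ge a 6 with h | h
    · interval_cases a <;>
        norm_num [Vl_5_0, Vl_5_1, Vl_5_2, Vl_5_3, Vl_5_4, Vl_5_5,
          Vl_6_0, Vl_6_1, Vl_6_2, Vl_6_3, Vl_6_4, Vl_6_5]
    · rw [Vw_big _ 5 _ (by exact_mod_cast (by omega : 5 ≤ a)),
        Vw_big _ 6 _ (by exact_mod_cast (by omega : 6 ≤ a))]
      have h1 : (0:ℝ) ≤ (47/53:ℝ)^(a+1) := by positivity
      have h2 : (47/53:ℝ)^(a+1) ≤ 1 := pow_le_one₀ (by norm_num) (by norm_num)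
      nlinarith
  | succ n hn ihn =>
    intro a
    match a with
    | 0 =>
      have h1 := ihn 1
      rw [show ((0:ℕ):ℤ) = 0 from rfl, Vw_succ_zero, Vw_succ_zero]
      rw [show ((1:ℕ):ℤ) = 1 from rfl] at h1
      norm_num at h1 ⊢
      nlinarith [h1]
    | (b+1) =>
      have h0 := ihn b
      have h2 := ihn (b+2)
      have c1 : (0:ℤ) ≤ ((b+1 : ℕ):ℤ) := by positivity
      rw [show (((b+1:ℕ)):ℤ) = (b:ℤ)+1 by push_cast; ring] at *
      rw [show (((b+2:ℕ)):ℤ) = ((b:ℤ)+1)+1 by push_cast; ring] at h2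
      rw [Vw_succ (47/100 : ℝ) (n+1) ((b:ℤ)+1) (by omega),
          Vw_succ (47/100 : ℝ) n ((b:ℤ)+1) (by omega)]
      have e1 : (47/53:ℝ)^(b+1+1) = (47/53) * (47/53:ℝ)^(b+1) := by rw [pow_succ]; ring
      have e2 : (47/53:ℝ)^(b+2+1) = (2209/2809) * (47/53:ℝ)^(b+1) := by
        rw [pow_succ, pow_succ]; ring
      rw [show ((b:ℤ)+1)-1 = (b:ℤ) from by ring, show ((b:ℤ)+1)+1 = (b:ℤ)+1+1 from rfl]
      rw [show (b+1+1 : ℕ) = b+2 from rfl] at *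
      have e3 : (47/53:ℝ)^(b+2) = (47/53) * (47/53:ℝ)^(b+1) := by rw [pow_succ]; ring
      have e4 : (47/53:ℝ)^(b+3) = (2209/2809) * (47/53:ℝ)^(b+1) := by
        rw [pow_succ, pow_succ]; ring
      nlinarith [h0, h2]

/-- Lower bound `V_m(j) - π_m(j) ≥ V_m(j-2) - ε` given the `ε`-controlled boundary. -/
lemma DEL : ∀ m : ℕ,
    (∀ k, k ≤ m → piVal (47/100) k 1 ≤ U k (47/100) + 21/10000) →
    ∀ j : ℕ, 1 ≤ j →
      Vw (47/100) m ((j:ℤ)-2) - 21/10000 ≤ Vw (47/100) m (j:ℤ) - piVal (47/100) m j := by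
  intro m
  induction m with
  | zero =>
    intro _ j hj
    match j, hj with
    | 1, _ =>
      rw [piVal_b01, Vw_neg _ 0 (((1:ℕ):ℤ)-2) (by norm_num),
        Vw_zero _ ((1:ℕ):ℤ) (by norm_num)]
      norm_num
    | (j'+2), _ =>
      rw [piVal_b2, Vw_zero _ (((j'+2:ℕ)):ℤ) (by positivity),
        Vw_zero _ ((((j'+2:ℕ)):ℤ)-2) (by push_cast; omega)]
      norm_num
  | succ m ihm =>
    intro h j hj
    have hm : ∀ k, k ≤ m → piVal (47/100) k 1 ≤ U k (47/100) + 21/10000 :=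
      fun k hk => h k (le_trans hk (Nat.le_succ m))
    match j, hj with
    | 1, _ =>
      have hb := h (m+1) le_rfl
      rw [show (((1:ℕ)):ℤ) = (1:ℤ) from rfl, Vw_neg _ _ ((1:ℤ)-2) (by norm_num), ← U_eq_Vw]
      linarith
    | (j'+2), _ =>
      have h1 := ihm hm (j'+1) (by omega)
      have h2 := ihm hm (j'+3) (by omega)
      rw [piVal_twoE]
      have e0 : (((j'+2:ℕ)):ℤ) = (j':ℤ)+2 := by push_cast; ring
      rw [e0, show ((j':ℤ)+2)-2 = (j':ℤ) from by ring,
         Vw_succ (47/100:ℝ) m ((j':ℤ)+2) (by positivity),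
         Vw_succ (47/100:ℝ) m (j':ℤ) (Int.natCast_nonneg j')]
      have e1 : (((j'+1:ℕ)):ℤ) = (j':ℤ)+1 := by push_cast; ring
      have e3 : (((j'+3:ℕ)):ℤ) = (j':ℤ)+3 := by push_cast; ring
      rw [e1, show ((j':ℤ)+1)-2 = (j':ℤ)-1 from by ring] at h1
      rw [e3, show ((j':ℤ)+3)-2 = (j':ℤ)+1 from by ring] at h2
      rw [show ((j':ℤ)+2)-1 = (j':ℤ)+1 from by ring,
        show ((j':ℤ)+2)+1 = (j':ℤ)+3 from by ring]
      linarith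


/-- Main induction: optimality of stopping (`U_n ≥ W_n`) at `p = 0.47` for all `n ≠ 4`,
together with the bound `π_n(0) ≤ c·U_n - ρ`. -/
lemma main_all : ∀ n : ℕ, (n ≠ 4 → W n (47/100) ≤ U n (47/100)) ∧
    (3 ≤ n → piVal (47/100) n 0 ≤ (2809/2209) * U n (47/100) - 3/250) := by
  intro n
  induction n using Nat.strong_induction_on with
  | _ n ih =>
  by_cases hn7 : n ≤ 7
  · interval_cases n
    · exact ⟨fun _ => by rw [Ul_0, Wl_0]; norm_num, fun h => absurd h (by norm_num)⟩
    · exact ⟨fun _ => by rw [Ul_1, Wl_1]; norm_num, fun h => absurd h (by norm_num)⟩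
    · exact ⟨fun _ => by rw [Ul_2, Wl_2]; norm_num, fun h => absurd h (by norm_num)⟩
    · exact ⟨fun _ => by rw [Ul_3, Wl_3]; norm_num,
        fun _ => by rw [pil_3_0, Ul_3]; norm_num⟩
    · exact ⟨fun h => absurd rfl h, fun _ => by rw [pil_4_0, Ul_4]; norm_num⟩
    · exact ⟨fun _ => by rw [Ul_5, Wl_5]; norm_num,
        fun _ => by rw [pil_5_0, Ul_5]; norm_num⟩
    · exact ⟨fun _ => by rw [Ul_6, Wl_6]; norm_num,
        fun _ => by rw [pil_6_0, Ul_6]; norm_num⟩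
    · exact ⟨fun _ => by rw [Ul_7, Wl_7]; norm_num,
        fun _ => by rw [pil_7_0, Ul_7]; norm_num⟩
  · push_neg at hn7
    obtain ⟨m, rfl⟩ : ∃ m, n = m + 1 := ⟨n-1, by omega⟩
    have hm : 7 ≤ m := by omega
    have hpi1 : ∀ k, k ≤ m → piVal (47/100) k 1 ≤ U k (47/100) + 21/10000 := by
      intro k hk
      match k with
      | 0 => rw [piVal_b01, Ul_0]; norm_num
      | (k'+1) =>
        rw [piVal_oneE]
        have hWe : (47/100:ℝ) * piVal (47/100) k' 0 + (1-47/100) * piVal (47/100) k' 2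
            = W (k'+1) (47/100) := by
          unfold W
          rw [show (k'+1-1 : ℕ) = k' from rfl]
        rcases eq_or_ne (k'+1) 4 with h4 | h4
        · have hk3 : k' = 3 := by omega
          subst hk3
          rw [hWe, Ul_4, Wl_4]
          apply max_le <;> norm_num
        · have hUW := (ih (k'+1) (by omega)).1 h4
          apply max_le
          · linarith
          · rw [hWe]; linarith
    constructor
    · intro _
      obtain ⟨m', rfl⟩ : ∃ m', m = m' + 1 := ⟨m-1, by omega⟩
      have hDel := DEL (m'+1) hpi1 2 (by norm_num)
      rw [show ((2:ℕ):ℤ) = 2 from rfl, show ((2:ℤ)-2) = 0 from rfl] at hDel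
      have hU : U (m'+1+1) (47/100)
          = (47/100) * Vw (47/100) (m'+1) 0 + (53/100) * Vw (47/100) (m'+1) 2 := by
        rw [U_eq_Vw, Vw_succ (47/100:ℝ) (m'+1) 1 (by norm_num)]
        norm_num
      have hW : W (m'+1+1) (47/100)
          = (47/100) * piVal (47/100) (m'+1) 0 + (53/100) * piVal (47/100) (m'+1) 2 := by
        unfold W
        rw [show (m'+1+1-1 : ℕ) = m'+1 from rfl]
        norm_num
      have hpi0 : piVal (47/100) (m'+1) 0
          = (47/100) * piVal (47/100) m' 0 + (53/100) * piVal (47/100) m' 1 := by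
        rw [piVal_zeroE]; norm_num
      have hV0 : Vw (47/100) (m'+1) 0 = (53/100) * Vw (47/100) m' 1 := by
        rw [Vw_succ_zero]; norm_num
      have hg : piVal (47/100) m' 0 ≤ (2809/2209) * U m' (47/100) - 3/250 :=
        (ih m' (by omega)).2 (by omega)
      have hp1 : piVal (47/100) m' 1 ≤ U m' (47/100) + 21/10000 := hpi1 m' (by omega)
      have hU' : U m' (47/100) = Vw (47/100) m' 1 := U_eq_Vw _ _
      rw [hU, hW]
      rw [hU'] at hg hp1
      linarith
    · intro _
      have hpi0 : piVal (47/100) (m+1) 0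
          = (47/100) * piVal (47/100) m 0 + (53/100) * piVal (47/100) m 1 := by
        rw [piVal_zeroE]; norm_num
      have hg : piVal (47/100) m 0 ≤ (2809/2209) * U m (47/100) - 3/250 :=
        (ih m (by omega)).2 (by omega)
      have hp1 : piVal (47/100) m 1 ≤ U m (47/100) + 21/10000 := hpi1 m le_rfl
      have hCD := CD m (by omega) 1
      rw [show ((1:ℕ):ℤ) = 1 from rfl] at hCD
      norm_num at hCD
      have e1 : U m (47/100) = Vw (47/100) m 1 := U_eq_Vw _ _
      have e2 : U (m+1) (47/100) = Vw (47/100) (m+1) 1 := U_eq_Vw _ _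
      rw [hpi0, e2]
      rw [e1] at hg hp1
      linarith

/-- Elementary quartic bound: `1 - 2x ≥ x²(1-x)²` with `0 < x < 1` forces `x ≤ 0.47`. -/
lemma quartic_bound (x : ℝ) (hx0 : 0 < x) (hx1 : x < 1)
    (key : 1 - 2*x - x^2 * (1-x)^2 ≥ 0) : x ≤ 47/100 := by
  by_contra hgt
  push_neg at hgt
  rcases le_or_gt (1/2 : ℝ) x with hc | hc
  · have hq : (0:ℝ) < 1 - x := by linarith
    have hx2 : (0:ℝ) < x^2 * (1-x)^2 := mul_pos (pow_pos hx0 2) (pow_pos hq 2)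
    linarith
  · have h1 : (0:ℝ) < x - 47/100 := by linarith
    have h2 : (0:ℝ) < 53/100 - x := by linarith
    have ht : x * (1-x) > 2491/10000 := by nlinarith [mul_pos h1 h2]
    nlinarith [ht, mul_pos hx0 (show (0:ℝ) < 1 - x by linarith)]

/-- Membership bound: any `p ∈ (0,1)` with `U_4(p) ≥ W_4(p)` satisfies `p ≤ 0.47`. -/
lemma D4_bound (x : ℝ) (hx0 : 0 < x) (hx1 : x < 1) (hUW : U 4 x ≥ W 4 x) : x ≤ 47/100 := by
  have hq0 : (0:ℝ) ≤ 1 - x := by linarith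
  have hx0' : (0:ℝ) ≤ x := hx0.le
  -- symbolic V values
  have v10 : Vw x 1 0 = 1 - x := by
    rw [show (1:ℕ) = 0+1 from rfl, Vw_succ_zero, Vw_big _ _ _ (by norm_num)]; ring
  have v12 : Vw x 1 2 = 1 := Vw_big _ _ _ (by norm_num)
  have v21 : Vw x 2 1 = x * (1-x) + (1-x) := by
    rw [show (2:ℕ) = 1+1 from rfl, Vw_succ x 1 1 (by norm_num)]
    norm_num [v10, v12]
  have v23 : Vw x 2 3 = 1 := Vw_big _ _ _ (by norm_num)
  have v30 : Vw x 3 0 = (1-x) * (x * (1-x) + (1-x)) := by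
    rw [show (3:ℕ) = 2+1 from rfl, Vw_succ_zero, v21]
  have v32 : Vw x 3 2 = x * (x * (1-x) + (1-x)) + (1-x) := by
    rw [show (3:ℕ) = 2+1 from rfl, Vw_succ x 2 2 (by norm_num)]
    norm_num [v21, v23]
  have hU4 : U 4 x = x * ((1-x) * (x * (1-x) + (1-x)))
      + (1-x) * (x * (x * (1-x) + (1-x)) + (1-x)) := by
    rw [U_eq_Vw, show (4:ℕ) = 3+1 from rfl, Vw_succ x 3 1 (by norm_num)]
    norm_num [v30, v32]
  -- symbolic π lower bounds
  have u1 : U 1 x = 1 := by rw [U_eq_Vw, Vw_big _ _ _ (by norm_num)]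
  have u2 : U 2 x = x * (1-x) + (1-x) := by rw [U_eq_Vw, v21]
  have pi10 : piVal x 1 0 = 1 := by
    rw [show (1:ℕ) = 0+1 from rfl, piVal_zeroE, piVal_b00, piVal_b01]; ring
  have pi11 : piVal x 1 1 ≥ 1 := by
    rw [show (1:ℕ) = 0+1 from rfl, piVal_oneE]
    rw [show (0+1 : ℕ) = 1 from rfl, u1]
    exact le_max_left _ _
  have pi12 : piVal x 1 2 = x := by
    rw [show (1:ℕ) = 0+1 from rfl, show (2:ℕ) = 0+2 from rfl, piVal_twoE,
      piVal_b01, show (0+3:ℕ) = 1+2 from rfl, piVal_b2]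
    ring
  have pi14 : piVal x 1 4 = 0 := by
    rw [show (1:ℕ) = 0+1 from rfl, show (4:ℕ) = 2+2 from rfl, piVal_twoE,
      show (2+1:ℕ) = 1+2 from rfl, piVal_b2, show (2+3:ℕ) = 3+2 from rfl, piVal_b2]
    ring
  have pi20 : piVal x 2 0 ≥ 1 := by
    rw [show (2:ℕ) = 1+1 from rfl, piVal_zeroE, pi10]
    nlinarith [pi11]
  have pi21 : piVal x 2 1 ≥ x * (1-x) + (1-x) := by
    rw [show (2:ℕ) = 1+1 from rfl, piVal_oneE, show (1+1 : ℕ) = 2 from rfl, u2]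
    exact le_max_left _ _
  have pi23 : piVal x 2 3 = x * x := by
    rw [show (2:ℕ) = 1+1 from rfl, show (3:ℕ) = 1+2 from rfl, piVal_twoE,
      show (1+1:ℕ) = 2 from rfl, show (1+3:ℕ) = 4 from rfl, pi12, pi14]
    ring
  have pi30 : piVal x 3 0 ≥ x + (1-x) * (x * (1-x) + (1-x)) := by
    rw [show (3:ℕ) = 2+1 from rfl, piVal_zeroE]
    nlinarith [pi20, pi21]
  have pi32 : piVal x 3 2 ≥ x * (x * (1-x) + (1-x)) + (1-x) * (x * x) := by
    rw [show (3:ℕ) = 2+1 from rfl, show (2:ℕ) = 0+2 from rfl, piVal_twoE,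
      show (0+1:ℕ) = 1 from rfl, show (0+3:ℕ) = 3 from rfl, pi23]
    nlinarith [pi21]
  have hW4 : W 4 x ≥ x * (x + (1-x) * (x * (1-x) + (1-x)))
      + (1-x) * (x * (x * (1-x) + (1-x)) + (1-x) * (x * x)) := by
    unfold W
    rw [show (4-1 : ℕ) = 3 from rfl]
    nlinarith [pi30, pi32]
  have key : 1 - 2*x - x^2 * (1-x)^2 ≥ 0 := by
    have h5 := hUW
    rw [hU4] at h5
    linarith [hW4]
  exact quartic_bound x hx0 hx1 key

/-- `p_4` is the smallest term of the sequence: for every `n ≥ 1`, `p_n ≥ p_4`. -/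
theorem pc_four_smallest (n : ℕ) (hn : 1 ≤ n) : pc n ≥ pc 4 := by
  rcases eq_or_ne n 4 with rfl | hne
  · exact le_refl _
  · have h1 : pc 4 ≤ 47/100 := by
      apply Real.sSup_le
      · rintro x ⟨⟨hx0, hx1⟩, hUW⟩
        exact D4_bound x hx0 hx1 hUW
      · norm_num
    have h2 : (47/100:ℝ) ∈ {p : ℝ | p ∈ Set.Ioo (0:ℝ) 1 ∧ U n p ≥ W n p} :=
      ⟨⟨by norm_num, by norm_num⟩, (main_all n).1 hne⟩
    have h3 : BddAbove {p : ℝ | p ∈ Set.Ioo (0:ℝ) 1 ∧ U n p ≥ W n p} :=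
      ⟨1, fun x hx => le_of_lt hx.1.2⟩
    have h4 := le_csSup h3 h2
    calc pc 4 ≤ 47/100 := h1
      _ ≤ pc n := h4
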